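/- Let d ≥ 1, let 𝒞 = [−1/2, 1/2]^d, and define g : ℝ^d → ℝ by g(x) = dist(x, ∂𝒞) for x ∈ 𝒞 and g(x) = 0 otherwise, where ∂𝒞 is the boundary of 𝒞 and dist(x, ∂𝒞) = inf{‖x − y‖ : y ∈ ∂𝒞} with ‖·‖ the Euclidean norm. Then ∫_{ℝ^d} g(x)² dx = 1 / (2(d+1)(d+2)). -/

import Mathlib

open MeasureTheory Set

section Aux

lemma coord_abs_sub_le_dist {d : ℕ} (x y : EuclideanSpace ℝ (Fin d)) (i : Fin d) :
    |x i - y i| ≤ dist x y := by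
  rw [EuclideanSpace.dist_eq, ← Real.sqrt_sq_eq_abs]
  apply Real.sqrt_le_sqrt
  have h : (x i - y i) ^ 2 = dist (x i) (y i) ^ 2 := by
    rw [Real.dist_eq, sq_abs]
  rw [h]
  exact Finset.single_le_sum (f := fun j => dist (x j) (y j) ^ 2)
    (fun j _ => sq_nonneg _) (Finset.mem_univ i)

lemma vol_cube (d : ℕ) (r : ℝ) :
    volume {x : EuclideanSpace ℝ (Fin d) | ∀ i, |x i| ≤ r}
      = ENNReal.ofReal (2 * r) ^ d := by
  have hpre : ((MeasurableEquiv.toLp 2 (Fin d → ℝ)).symm) ⁻¹'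
      (Set.univ.pi fun _ : Fin d => Set.Icc (-r) r)
      = {x : EuclideanSpace ℝ (Fin d) | ∀ i, |x i| ≤ r} := by
    ext x
    simp only [Set.mem_preimage, Set.mem_pi, Set.mem_univ, forall_true_left,
      Set.mem_Icc, Set.mem_setOf_eq, abs_le]
    rfl
  have h := (EuclideanSpace.volume_preserving_symm_measurableEquiv_toLp (Fin d)).measure_preimage
    (s := Set.univ.pi fun _ : Fin d => Set.Icc (-r) r)
    (MeasurableSet.univ_pi fun _ => measurableSet_Icc).nullMeasurableSet
  rw [hpre] at h
  rw [h, volume_pi_pi, Real.volume_Icc]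
  rw [Finset.prod_const, Finset.card_univ, Fintype.card_fin]
  congr 2
  ring

lemma cube_closed (d : ℕ) :
    IsClosed {y : EuclideanSpace ℝ (Fin d) | ∀ i, |y i| ≤ 1 / 2} := by
  have : {y : EuclideanSpace ℝ (Fin d) | ∀ i, |y i| ≤ 1 / 2}
      = ⋂ i, {y : EuclideanSpace ℝ (Fin d) | |y i| ≤ 1 / 2} := by
    ext y; simp
  rw [this]
  exact isClosed_iInter fun i =>
    isClosed_le (continuous_abs.comp (EuclideanSpace.proj i).continuous) continuous_const

lemma interior_cube (d : ℕ) :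
    interior {y : EuclideanSpace ℝ (Fin d) | ∀ i, |y i| ≤ 1 / 2}
      = {y : EuclideanSpace ℝ (Fin d) | ∀ i, |y i| < 1 / 2} := by
  set C := {y : EuclideanSpace ℝ (Fin d) | ∀ i, |y i| ≤ 1 / 2}
  set U := {y : EuclideanSpace ℝ (Fin d) | ∀ i, |y i| < 1 / 2}
  have hUopen : IsOpen U := by
    have : U = ⋂ i, {y : EuclideanSpace ℝ (Fin d) | |y i| < 1 / 2} := by ext y; simp [U]
    rw [this]
    exact isOpen_iInter_of_finite fun i =>
      isOpen_lt (continuous_abs.comp (EuclideanSpace.proj i).continuous) continuous_const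
  apply Subset.antisymm
  · intro y hy i
    by_contra hlt
    have hyC : y ∈ C := interior_subset hy
    have heq : |y i| = 1 / 2 := le_antisymm (hyC i) (not_lt.mp hlt)
    obtain ⟨ε, εpos, hball⟩ := Metric.isOpen_iff.mp isOpen_interior y hy
    set c : ℝ := if 0 ≤ y i then ε / 2 else -(ε / 2) with hc
    have habs : |c| = ε / 2 := by
      rw [hc]; split_ifs <;> simp [abs_of_nonneg, abs_of_nonpos, le_of_lt εpos,
        abs_of_pos (by linarith : (0:ℝ) < ε / 2)]
    have hz : y + EuclideanSpace.single i c ∈ C := by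
      apply interior_subset
      apply hball
      rw [Metric.mem_ball, dist_eq_norm]
      have : y + EuclideanSpace.single i c - y = EuclideanSpace.single i c := by abel
      rw [this, EuclideanSpace.norm_single, Real.norm_eq_abs, habs]
      linarith
    have hzi := hz i
    rw [PiLp.add_apply, EuclideanSpace.single_apply, if_pos rfl] at hzi
    rcases le_or_gt 0 (y i) with hsgn | hsgn
    · have hyi : y i = 1 / 2 := by rw [abs_of_nonneg hsgn] at heq; exact heq
      have : c = ε / 2 := by rw [hc, if_pos hsgn]
      rw [hyi, this] at hzi
      have := le_abs_self (1 / 2 + ε / 2)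
      have := le_trans this hzi
      linarith
    · have hyi : y i = -(1 / 2) := by rw [abs_of_neg hsgn] at heq; linarith
      have hcc : c = -(ε / 2) := by rw [hc, if_neg (not_le.mpr hsgn)]
      rw [hyi, hcc] at hzi
      have h1 : |y i + c| = 1 / 2 + ε / 2 := by
        rw [hyi, hcc, abs_of_nonpos (by linarith)]; ring
      rw [hyi, hcc] at h1
      rw [h1] at hzi
      linarith
  · exact interior_maximal (fun y hy i => le_of_lt (hy i)) hUopen

lemma frontier_cube (d : ℕ) :
    frontier {y : EuclideanSpace ℝ (Fin d) | ∀ i, |y i| ≤ 1 / 2}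
      = {y : EuclideanSpace ℝ (Fin d) | (∀ i, |y i| ≤ 1 / 2) ∧ ∃ i, |y i| = 1 / 2} := by
  rw [(cube_closed d).frontier_eq, interior_cube d]
  ext y
  simp only [mem_diff, mem_setOf_eq, not_forall, not_lt]
  constructor
  · rintro ⟨h1, i, h2⟩; exact ⟨h1, i, le_antisymm (h1 i) h2⟩
  · rintro ⟨h1, i, h2⟩; exact ⟨h1, i, h2.ge⟩

lemma infDist_cube (d : ℕ) (hd : 1 ≤ d) (x : EuclideanSpace ℝ (Fin d))
    (hne : (Finset.univ : Finset (Fin d)).Nonempty)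
    (hx : ∀ i, |x i| ≤ 1 / 2) :
    Metric.infDist x (frontier {y : EuclideanSpace ℝ (Fin d) | ∀ i, |y i| ≤ 1 / 2})
      = 1 / 2 - Finset.univ.sup' hne (fun i => |x i|) := by
  set S := Finset.univ.sup' hne (fun i => |x i|) with hS
  obtain ⟨i₀, _, hi₀⟩ := Finset.exists_mem_eq_sup' hne (fun i => |x i|)
  set c : ℝ := if 0 ≤ x i₀ then 1 / 2 - x i₀ else -(1 / 2) - x i₀ with hc
  set y := x + EuclideanSpace.single i₀ c with hy
  have hyi₀ : |y i₀| = 1 / 2 := by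
    rw [hy, PiLp.add_apply, EuclideanSpace.single_apply, if_pos rfl, hc]
    split_ifs with h
    · norm_num
    · rw [show x i₀ + (-(1/2) - x i₀) = -(1/2) by ring, abs_neg]; norm_num
  have hyj : ∀ j, j ≠ i₀ → y j = x j := by
    intro j hj
    rw [hy, PiLp.add_apply, EuclideanSpace.single_apply, if_neg hj, add_zero]
  have hyfr : y ∈ frontier {y : EuclideanSpace ℝ (Fin d) | ∀ i, |y i| ≤ 1 / 2} := by
    rw [frontier_cube d]
    refine ⟨fun j => ?_, ⟨i₀, hyi₀⟩⟩
    by_cases hj : j = i₀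
    · rw [hj, hyi₀]
    · rw [hyj j hj]; exact hx j
  have habsc : |c| = 1 / 2 - |x i₀| := by
    rw [hc]
    split_ifs with h
    · rw [abs_of_nonneg h, abs_of_nonneg (by linarith [hx i₀, abs_le.mp (hx i₀)] : (0:ℝ) ≤ 1/2 - x i₀)]
    · push_neg at h
      have h1 : -(1/2) ≤ x i₀ := (abs_le.mp (hx i₀)).1
      rw [abs_of_neg h, abs_of_nonpos (by linarith : -(1/2) - x i₀ ≤ 0)]
      ring
  have hdist : dist x y = 1 / 2 - S := by
    rw [hy, dist_eq_norm]
    have : x - (x + EuclideanSpace.single i₀ c) = -(EuclideanSpace.single i₀ c) := by abel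
    rw [this, norm_neg, EuclideanSpace.norm_single, Real.norm_eq_abs, habsc, hS, hi₀]
  have hSle : S ≤ 1 / 2 := by
    rw [hS]; exact Finset.sup'_le hne _ fun i _ => hx i
  apply le_antisymm
  · calc Metric.infDist x _ ≤ dist x y := Metric.infDist_le_dist_of_mem hyfr
    _ = 1 / 2 - S := hdist
  · by_contra hcon
    push_neg at hcon
    obtain ⟨z, hzfr, hzd⟩ := (Metric.infDist_lt_iff ⟨y, hyfr⟩).mp hcon
    rw [frontier_cube d] at hzfr
    obtain ⟨hz1, i, hzi⟩ := hzfr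
    have h1 : |x i - z i| ≤ dist x z := coord_abs_sub_le_dist x z i
    have h2 : |z i| - |x i| ≤ |x i - z i| := by
      have := abs_sub_abs_le_abs_sub (z i) (x i)
      rwa [abs_sub_comm] at this
    have h3 : |x i| ≤ S := by rw [hS]; exact Finset.le_sup' (fun j => |x j|) (Finset.mem_univ i)
    rw [hzi] at h2
    linarith

lemma J_int (n : ℕ) :
    ∫ s in (0:ℝ)..(1 / 2), (1 - 2 * s) ^ n = 1 / (2 * (n + 1)) := by
  have h : (fun s : ℝ => (1 - 2 * s) ^ n) = fun s : ℝ => (fun u : ℝ => (1 - u) ^ n) (2 * s) :=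
    rfl
  rw [h, intervalIntegral.integral_comp_mul_left (fun u : ℝ => (1 - u) ^ n)
    (by norm_num : (2:ℝ) ≠ 0)]
  norm_num
  rw [intervalIntegral.integral_comp_sub_left (fun u : ℝ => u ^ n) 1]
  norm_num [integral_pow]
  ring

end Aux

/-- equation (6.1) of the paper: the squared distance to the
boundary of the cube `𝒞 = [-1/2,1/2]^d`, extended by `0` outside `𝒞`,
integrates to `1/(2(d+1)(d+2))`. -/
theorem integral_sq_dist_to_boundary_cube
    (d : ℕ) (hd : 1 ≤ d)
    (C : Set (EuclideanSpace ℝ (Fin d)))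
    (hC : C = {x : EuclideanSpace ℝ (Fin d) | ∀ t, |x t| ≤ 1 / 2})
    (g : EuclideanSpace ℝ (Fin d) → ℝ)
    (hg : g = C.indicator fun x => Metric.infDist x (frontier C)) :
    ∫ x, g x ^ 2 = 1 / (2 * ((d : ℝ) + 1) * ((d : ℝ) + 2)) := by
  have hnefin : Nonempty (Fin d) := ⟨⟨0, hd⟩⟩
  have hne : (Finset.univ : Finset (Fin d)).Nonempty := Finset.univ_nonempty
  subst hC hg
  set C := {x : EuclideanSpace ℝ (Fin d) | ∀ t, |x t| ≤ 1 / 2} with hCdef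
  set M : EuclideanSpace ℝ (Fin d) → ℝ :=
    fun x => Finset.univ.sup' hne (fun i => |x i|) with hM
  have hMcont : Continuous M :=
    Continuous.finset_sup'_apply hne
      (fun i _ => continuous_abs.comp (EuclideanSpace.proj i).continuous)
  have hM0 : ∀ x, 0 ≤ M x := fun x =>
    le_trans (abs_nonneg _) (Finset.le_sup' (fun i => |x i|) (Finset.mem_univ (Classical.arbitrary (Fin d))))
  have hMC : ∀ x ∈ C, M x ≤ 1 / 2 := fun x hx =>
    Finset.sup'_le hne _ fun i _ => hx i
  set F : EuclideanSpace ℝ (Fin d) → ℝ := fun x => (1 / 2 - M x) ^ 2 with hF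
  have hgeq : ∀ x, (C.indicator (fun x => Metric.infDist x (frontier C)) x) ^ 2
      = C.indicator F x := by
    intro x
    by_cases hx : x ∈ C
    · rw [Set.indicator_of_mem hx, Set.indicator_of_mem hx, hF,
        infDist_cube d hd x hne hx]
    · rw [Set.indicator_of_notMem hx, Set.indicator_of_notMem hx]
      norm_num
  simp_rw [hgeq]
  have hCclosed : IsClosed C := cube_closed d
  have hCmeas : MeasurableSet C := hCclosed.measurableSet
  have hvolC : volume C = 1 := by
    rw [hCdef, vol_cube d (1 / 2)]
    norm_num
  have hFcont : Continuous F := (continuous_const.sub hMcont).pow 2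
  have hIntOn : IntegrableOn F C := by
    apply Measure.integrableOn_of_bounded (M := 1 / 4)
      (by rw [hvolC]; exact ENNReal.one_ne_top) hFcont.aestronglyMeasurable
    rw [ae_restrict_iff' hCmeas]
    filter_upwards with x hx
    have h1 := hM0 x
    have h2 := hMC x hx
    rw [Real.norm_eq_abs, hF, abs_of_nonneg (sq_nonneg _)]
    nlinarith
  have hInt : Integrable (C.indicator F) := hIntOn.integrable_indicator hCmeas
  have hbound : ∀ x, C.indicator F x ≤ 1 / 4 := by
    intro x
    by_cases hx : x ∈ C
    · rw [Set.indicator_of_mem hx, hF]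
      have h1 := hM0 x
      have h2 := hMC x hx
      nlinarith
    · rw [Set.indicator_of_notMem hx]; norm_num
  have hnn : ∀ x, 0 ≤ C.indicator F x :=
    fun x => Set.indicator_nonneg (fun y _ => sq_nonneg _) x
  rw [hInt.integral_eq_integral_Ioc_meas_le (M := 1 / 4)
    (Filter.Eventually.of_forall hnn) (Filter.Eventually.of_forall hbound)]
  have hmeas_eq : ∀ t ∈ Ioc (0:ℝ) (1 / 4),
      (volume {a | t ≤ C.indicator F a}).toReal = (1 - 2 * Real.sqrt t) ^ d := by
    intro t ht
    have hst : 0 < Real.sqrt t := Real.sqrt_pos.mpr ht.1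
    have hst2 : Real.sqrt t ≤ 1 / 2 := by
      have := Real.sqrt_le_sqrt ht.2
      rwa [show (1/4 : ℝ) = (1/2)^2 by norm_num, Real.sqrt_sq (by norm_num : (0:ℝ) ≤ 1/2)]
        at this
    have hset : {a | t ≤ C.indicator F a}
        = {x : EuclideanSpace ℝ (Fin d) | ∀ i, |x i| ≤ 1 / 2 - Real.sqrt t} := by
      ext x
      simp only [mem_setOf_eq]
      constructor
      · intro hx
        by_cases hxC : x ∈ C
        · rw [Set.indicator_of_mem hxC, hF] at hx
          have h2 := hMC x hxC
          have hsq : Real.sqrt t ≤ 1 / 2 - M x := by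
            have := Real.sqrt_le_sqrt hx
            rwa [Real.sqrt_sq (by linarith : (0:ℝ) ≤ 1/2 - M x)] at this
          intro i
          have : |x i| ≤ M x := Finset.le_sup' (fun j => |x j|) (Finset.mem_univ i)
          linarith
        · rw [Set.indicator_of_notMem hxC] at hx
          exact absurd (lt_of_lt_of_le ht.1 hx) (lt_irrefl 0)
      · intro hx
        have hxC : x ∈ C := fun i => le_trans (hx i) (by linarith)
        have hMx : M x ≤ 1 / 2 - Real.sqrt t :=
          Finset.sup'_le hne _ fun i _ => hx i
        rw [Set.indicator_of_mem hxC, hF]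
        calc t = Real.sqrt t ^ 2 := (Real.sq_sqrt ht.1.le).symm
        _ ≤ (1 / 2 - M x) ^ 2 := by
            apply pow_le_pow_left₀ hst.le
            linarith
    rw [hset, vol_cube d (1 / 2 - Real.sqrt t), ENNReal.toReal_pow,
      ENNReal.toReal_ofReal (by linarith : (0:ℝ) ≤ 2 * (1 / 2 - Real.sqrt t))]
    congr 1
    ring
  rw [setIntegral_congr_fun measurableSet_Ioc
    (fun t ht => (measureReal_def _ _).trans (hmeas_eq t ht)),
    ← intervalIntegral.integral_of_le (by norm_num : (0:ℝ) ≤ 1 / 4)]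
  have hsub : ∫ t in (0:ℝ)..(1 / 4), (1 - 2 * Real.sqrt t) ^ d
      = ∫ s in (0:ℝ)..(1 / 2), (2 * s) • ((1 - 2 * Real.sqrt (s ^ 2)) ^ d) := by
    have key := intervalIntegral.integral_comp_smul_deriv (a := (0:ℝ)) (b := 1/2)
      (f := fun s : ℝ => s ^ 2)
      (f' := fun s : ℝ => 2 * s) (g := fun u : ℝ => (1 - 2 * Real.sqrt u) ^ d)
      (fun s _ => by simpa using hasDerivAt_pow 2 s)
      (by fun_prop)
      (by fun_prop)
    simp only [Function.comp] at key
    norm_num at key ⊢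
    exact key.symm
  rw [hsub]
  have hcongr : ∫ s in (0:ℝ)..(1 / 2), (2 * s) • ((1 - 2 * Real.sqrt (s ^ 2)) ^ d)
      = ∫ s in (0:ℝ)..(1 / 2), ((1 - 2 * s) ^ d - (1 - 2 * s) ^ (d + 1)) := by
    apply intervalIntegral.integral_congr
    intro s hs
    rw [Set.uIcc_of_le (by norm_num : (0:ℝ) ≤ 1/2)] at hs
    show (2 * s) • ((1 - 2 * Real.sqrt (s ^ 2)) ^ d) = (1 - 2 * s) ^ d - (1 - 2 * s) ^ (d + 1)
    rw [Real.sqrt_sq hs.1, smul_eq_mul, pow_succ]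
    ring
  rw [hcongr, intervalIntegral.integral_sub
    ((by fun_prop : Continuous fun s : ℝ => (1 - 2 * s) ^ d).intervalIntegrable _ _)
    ((by fun_prop : Continuous fun s : ℝ => (1 - 2 * s) ^ (d + 1)).intervalIntegrable _ _),
    J_int d, J_int (d + 1)]
  have h1 : ((d : ℝ) + 1) ≠ 0 := by positivity
  have h2 : ((d : ℝ) + 2) ≠ 0 := by positivity
  push_cast
  field_simp
  ring
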